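/- There exists η > 0 such that for every A ∈ ℂ^{n₁+1}, every B ∈ ℂ^{n₃+1} and every z with |z| < η for which (P_A(z), Q_B(z)) ≠ (0,0), one has ω₊(∂F/∂x(z,A,B), ∂F/∂y(z,A,B)) > 0; i.e. the deformed disks F(·,A,B) are symplectic with respect to ω₊ at every immersion point near 0, with η independent of (A,B). -/

import Mathlib

open Complex ComplexConjugate Metric

/-- The monic-plus-perturbation polynomial `P_A(z) = z^n + Σ_{i=0}^n aᵢ zⁱ`. -/
noncomputable def Ppoly (n : ℕ) (A : Fin (n + 1) → ℂ) (z : ℂ) : ℂ :=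
  z ^ n + ∑ i : Fin (n + 1), A i * z ^ (i : ℕ)

/-- The symplectic form `ω₊(u,v) = (u₁v₂ − u₂v₁) + (u₃v₄ − u₄v₃)` on `ℝ⁴ ≅ ℂ²`. -/
noncomputable def omegaPlus (u v : ℂ × ℂ) : ℝ :=
  (u.1.re * v.1.im - u.1.im * v.1.re) + (u.2.re * v.2.im - u.2.im * v.2.re)

noncomputable def Lmap' (a b : ℂ) : ℂ →L[ℝ] ℂ :=
  ((1 : ℂ →L[ℂ] ℂ).smulRight a).restrictScalars ℝ +
    (Complex.conjCLE.toContinuousLinearMap).comp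
      (((1 : ℂ →L[ℂ] ℂ).smulRight b).restrictScalars ℝ)

lemma Lmap'_apply (a b v : ℂ) : Lmap' a b v = a * v + conj (b * v) := by
  simp [Lmap', mul_comm]

lemma hasFDerivAt_pair (g₁ g₂ : ℂ → ℂ) (a b z : ℂ)
    (h1 : HasDerivAt g₁ a z) (h2 : HasDerivAt g₂ b z) :
    HasFDerivAt (fun w => g₁ w + conj (g₂ w)) (Lmap' a b) z := by
  have H1 := (h1.hasFDerivAt.restrictScalars ℝ)
  have H2 := (h2.hasFDerivAt.restrictScalars ℝ)
  exact H1.add ((Complex.conjCLE.toContinuousLinearMap.hasFDerivAt).comp z H2)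

lemma omega_calc (a b c d : ℂ) :
    omegaPlus (a + conj b, c + conj d) (a * I + conj (b * I), c * I + conj (d * I))
      = Complex.normSq a - Complex.normSq b + Complex.normSq c - Complex.normSq d := by
  simp [omegaPlus, Complex.normSq_apply, Complex.add_re, Complex.add_im,
    Complex.mul_re, Complex.mul_im]
  ring

lemma ns_eq (w : ℂ) : Complex.normSq w = ‖w‖ ^ 2 := by
  rw [Complex.normSq_eq_norm_sq]


/-- There is `η > 0`, independent of `(A,B)`, such that the deformed
disks `F(·,A,B)` are symplectic w.r.t. `ω₊` at every point `z` with `|z| < η` where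
`(P_A(z), Q_B(z)) ≠ (0,0)`. -/
theorem deformed_disks_are_symplectic
    (n₁ n₂ n₃ n₄ : ℕ)
    (h12 : n₁ < n₂) (h13 : n₁ < n₃) (h14 : n₁ < n₄) (h32 : n₃ < n₂)
    (hsum : n₁ + n₂ = n₃ + n₄)
    (t₁ t₂ t₃ t₄ f₁ f₂ f₃ f₄ : ℂ → ℂ)
    (ht₁ : DifferentiableOn ℂ t₁ (ball (0:ℂ) 1))
    (ht₂ : DifferentiableOn ℂ t₂ (ball (0:ℂ) 1))
    (ht₃ : DifferentiableOn ℂ t₃ (ball (0:ℂ) 1))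
    (ht₄ : DifferentiableOn ℂ t₄ (ball (0:ℂ) 1))
    (ht₁0 : t₁ 0 ≠ 0) (ht₂0 : t₂ 0 ≠ 0) (ht₃0 : t₃ 0 ≠ 0) (ht₄0 : t₄ 0 ≠ 0)
    (hf₁ : ∀ z ∈ ball (0:ℂ) 1, HasDerivAt f₁ (z ^ n₁ * t₁ z) z)
    (hf₂ : ∀ z ∈ ball (0:ℂ) 1, HasDerivAt f₂ (z ^ n₂ * t₂ z) z)
    (hf₃ : ∀ z ∈ ball (0:ℂ) 1, HasDerivAt f₃ (z ^ n₃ * t₃ z) z)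
    (hf₄ : ∀ z ∈ ball (0:ℂ) 1, HasDerivAt f₄ (z ^ n₄ * t₄ z) z)
    (hconf : ∀ z ∈ ball (0:ℂ) 1,
      (z ^ n₁ * t₁ z) * (z ^ n₂ * t₂ z) + (z ^ n₃ * t₃ z) * (z ^ n₄ * t₄ z) = 0)
    (g₁ g₂ g₃ g₄ : (Fin (n₁ + 1) → ℂ) → (Fin (n₃ + 1) → ℂ) → ℂ → ℂ)
    (hg₁0 : ∀ A B, g₁ A B 0 = 0) (hg₂0 : ∀ A B, g₂ A B 0 = 0)
    (hg₃0 : ∀ A B, g₃ A B 0 = 0) (hg₄0 : ∀ A B, g₄ A B 0 = 0)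
    (hg₁ : ∀ A B, ∀ z ∈ ball (0:ℂ) 1,
      HasDerivAt (g₁ A B) (Ppoly n₁ A z * t₁ z) z)
    (hg₂ : ∀ A B, ∀ z ∈ ball (0:ℂ) 1,
      HasDerivAt (g₂ A B) (z ^ (n₂ - n₃) * (Ppoly n₃ B z * t₂ z)) z)
    (hg₃ : ∀ A B, ∀ z ∈ ball (0:ℂ) 1,
      HasDerivAt (g₃ A B) (Ppoly n₃ B z * t₃ z) z)
    (hg₄ : ∀ A B, ∀ z ∈ ball (0:ℂ) 1,
      HasDerivAt (g₄ A B) (z ^ (n₄ - n₁) * (Ppoly n₁ A z * t₄ z)) z)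
    (FF : (Fin (n₁ + 1) → ℂ) → (Fin (n₃ + 1) → ℂ) → ℂ → ℂ × ℂ)
    (hFF : ∀ A B z, FF A B z =
      (g₁ A B z + conj (g₂ A B z), g₃ A B z + conj (g₄ A B z)))
    :
    ∃ η > (0:ℝ), ∀ (A : Fin (n₁ + 1) → ℂ) (B : Fin (n₃ + 1) → ℂ), ∀ z : ℂ, ‖z‖ < η →
      ¬(Ppoly n₁ A z = 0 ∧ Ppoly n₃ B z = 0) →
      0 < omegaPlus (fderiv ℝ (FF A B) z 1) (fderiv ℝ (FF A B) z Complex.I) := by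
  -- constants
  have hm₁ : (0:ℝ) < ‖t₁ 0‖ / 2 := half_pos (norm_pos_iff.mpr ht₁0)
  have hm₃ : (0:ℝ) < ‖t₃ 0‖ / 2 := half_pos (norm_pos_iff.mpr ht₃0)
  set m₁ : ℝ := ‖t₁ 0‖ / 2 with hm₁def
  set m₃ : ℝ := ‖t₃ 0‖ / 2 with hm₃def
  set M₂ : ℝ := ‖t₂ 0‖ + 1 with hM₂def
  set M₄ : ℝ := ‖t₄ 0‖ + 1 with hM₄def
  have hM₂ : (0:ℝ) < M₂ := by positivity
  have hM₄ : (0:ℝ) < M₄ := by positivity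
  have h01 : (0:ℂ) ∈ ball (0:ℂ) 1 := mem_ball_self one_pos
  have hc₁ : ContinuousAt t₁ 0 :=
    (ht₁.differentiableAt (isOpen_ball.mem_nhds h01)).continuousAt
  have hc₂ : ContinuousAt t₂ 0 :=
    (ht₂.differentiableAt (isOpen_ball.mem_nhds h01)).continuousAt
  have hc₃ : ContinuousAt t₃ 0 :=
    (ht₃.differentiableAt (isOpen_ball.mem_nhds h01)).continuousAt
  have hc₄ : ContinuousAt t₄ 0 :=
    (ht₄.differentiableAt (isOpen_ball.mem_nhds h01)).continuousAt
  obtain ⟨δ₁, hδ₁, Hδ₁⟩ := Metric.continuousAt_iff.mp hc₁ m₁ hm₁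
  obtain ⟨δ₂, hδ₂, Hδ₂⟩ := Metric.continuousAt_iff.mp hc₂ 1 one_pos
  obtain ⟨δ₃, hδ₃, Hδ₃⟩ := Metric.continuousAt_iff.mp hc₃ m₃ hm₃
  obtain ⟨δ₄, hδ₄, Hδ₄⟩ := Metric.continuousAt_iff.mp hc₄ 1 one_pos
  refine ⟨min (min δ₁ δ₂) (min (min δ₃ δ₄) (min 1 (min (m₁ / M₄) (m₃ / M₂)))), ?_, ?_⟩
  · have := div_pos hm₁ hM₄
    have := div_pos hm₃ hM₂
    positivity
  intro A B z hz hPQ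
  have hzδ₁ : ‖z‖ < δ₁ := lt_of_lt_of_le hz (le_trans (min_le_left _ _) (min_le_left _ _))
  have hzδ₂ : ‖z‖ < δ₂ := lt_of_lt_of_le hz (le_trans (min_le_left _ _) (min_le_right _ _))
  have hzδ₃ : ‖z‖ < δ₃ := lt_of_lt_of_le hz
    (le_trans (min_le_right _ _) (le_trans (min_le_left _ _) (min_le_left _ _)))
  have hzδ₄ : ‖z‖ < δ₄ := lt_of_lt_of_le hz
    (le_trans (min_le_right _ _) (le_trans (min_le_left _ _) (min_le_right _ _)))
  have hz1 : ‖z‖ < 1 := lt_of_lt_of_le hz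
    (le_trans (min_le_right _ _) (le_trans (min_le_right _ _) (min_le_left _ _)))
  have hz14 : ‖z‖ < m₁ / M₄ := lt_of_lt_of_le hz
    (le_trans (min_le_right _ _) (le_trans (min_le_right _ _)
      (le_trans (min_le_right _ _) (min_le_left _ _))))
  have hz32 : ‖z‖ < m₃ / M₂ := lt_of_lt_of_le hz
    (le_trans (min_le_right _ _) (le_trans (min_le_right _ _)
      (le_trans (min_le_right _ _) (min_le_right _ _))))
  have hzball : z ∈ ball (0:ℂ) 1 := by
    simpa [mem_ball, dist_eq_norm] using hz1
  -- norm bounds for the t's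
  have hdist : ∀ w : ℂ, dist w 0 = ‖w‖ := fun w => by simp [dist_eq_norm]
  have hb₁ : m₁ < ‖t₁ z‖ := by
    have h := Hδ₁ (show dist z 0 < δ₁ by rwa [hdist])
    have h2 := norm_sub_norm_le (t₁ 0) (t₁ z)
    rw [dist_eq_norm, norm_sub_rev] at h
    have : ‖t₁ 0‖ = 2 * m₁ := by rw [hm₁def]; ring
    linarith
  have hb₃ : m₃ < ‖t₃ z‖ := by
    have h := Hδ₃ (show dist z 0 < δ₃ by rwa [hdist])
    have h2 := norm_sub_norm_le (t₃ 0) (t₃ z)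
    rw [dist_eq_norm, norm_sub_rev] at h
    have : ‖t₃ 0‖ = 2 * m₃ := by rw [hm₃def]; ring
    linarith
  have hb₂ : ‖t₂ z‖ < M₂ := by
    have h := Hδ₂ (show dist z 0 < δ₂ by rwa [hdist])
    have h2 := norm_le_norm_add_norm_sub' (t₂ z) (t₂ 0)
    rw [dist_eq_norm] at h
    rw [hM₂def]; linarith
  have hb₄ : ‖t₄ z‖ < M₄ := by
    have h := Hδ₄ (show dist z 0 < δ₄ by rwa [hdist])
    have h2 := norm_le_norm_add_norm_sub' (t₄ z) (t₄ 0)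
    rw [dist_eq_norm] at h
    rw [hM₄def]; linarith
  -- the fderiv
  set a := Ppoly n₁ A z * t₁ z with ha
  set b := z ^ (n₂ - n₃) * (Ppoly n₃ B z * t₂ z) with hb
  set c := Ppoly n₃ B z * t₃ z with hc
  set d := z ^ (n₄ - n₁) * (Ppoly n₁ A z * t₄ z) with hd
  have hderiv : HasFDerivAt (FF A B) ((Lmap' a b).prod (Lmap' c d)) z := by
    have h := HasFDerivAt.prodMk (hasFDerivAt_pair _ _ a b z (hg₁ A B z hzball) (hg₂ A B z hzball))
      (hasFDerivAt_pair _ _ c d z (hg₃ A B z hzball) (hg₄ A B z hzball))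
    have hFFeq : FF A B = fun w => (g₁ A B w + conj (g₂ A B w), g₃ A B w + conj (g₄ A B w)) :=
      funext (hFF A B)
    rw [hFFeq]
    exact h
  rw [hderiv.fderiv]
  have e1 : ((Lmap' a b).prod (Lmap' c d)) 1 = (a + conj b, c + conj d) := by
    simp [ContinuousLinearMap.prod_apply, Lmap'_apply]
  have eI : ((Lmap' a b).prod (Lmap' c d)) Complex.I
      = (a * I + conj (b * I), c * I + conj (d * I)) := by
    simp [ContinuousLinearMap.prod_apply, Lmap'_apply]
  rw [e1, eI, omega_calc]
  -- key strict inequalities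
  have hk4 : 1 ≤ n₄ - n₁ := Nat.sub_pos_of_lt h14
  have hk2 : 1 ≤ n₂ - n₃ := Nat.sub_pos_of_lt h32
  have hzk4 : ‖z‖ ^ (n₄ - n₁) ≤ ‖z‖ := by
    calc ‖z‖ ^ (n₄ - n₁) ≤ ‖z‖ ^ 1 :=
          pow_le_pow_of_le_one (norm_nonneg z) hz1.le hk4
      _ = ‖z‖ := pow_one _
  have hzk2 : ‖z‖ ^ (n₂ - n₃) ≤ ‖z‖ := by
    calc ‖z‖ ^ (n₂ - n₃) ≤ ‖z‖ ^ 1 :=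
          pow_le_pow_of_le_one (norm_nonneg z) hz1.le hk2
      _ = ‖z‖ := pow_one _
  have key4 : ‖z‖ ^ (n₄ - n₁) * ‖t₄ z‖ < m₁ := by
    have h1 : ‖z‖ * M₄ < m₁ := (lt_div_iff₀ hM₄).mp hz14
    have h2 : ‖z‖ ^ (n₄ - n₁) * ‖t₄ z‖ ≤ ‖z‖ * M₄ :=
      mul_le_mul hzk4 hb₄.le (norm_nonneg _) (norm_nonneg _)
    linarith
  have key2 : ‖z‖ ^ (n₂ - n₃) * ‖t₂ z‖ < m₃ := by
    have h1 : ‖z‖ * M₂ < m₃ := (lt_div_iff₀ hM₂).mp hz32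
    have h2 : ‖z‖ ^ (n₂ - n₃) * ‖t₂ z‖ ≤ ‖z‖ * M₂ :=
      mul_le_mul hzk2 hb₂.le (norm_nonneg _) (norm_nonneg _)
    linarith
  -- expand normSq
  have expand : Complex.normSq a - Complex.normSq b + Complex.normSq c - Complex.normSq d
      = Complex.normSq (Ppoly n₁ A z) *
          (‖t₁ z‖ ^ 2 - (‖z‖ ^ (n₄ - n₁) * ‖t₄ z‖) ^ 2)
        + Complex.normSq (Ppoly n₃ B z) *
          (‖t₃ z‖ ^ 2 - (‖z‖ ^ (n₂ - n₃) * ‖t₂ z‖) ^ 2) := by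
    rw [ha, hb, hc, hd]
    simp only [map_mul, map_pow]
    rw [ns_eq (t₁ z), ns_eq (t₂ z), ns_eq (t₃ z), ns_eq (t₄ z), ns_eq z]
    ring
  rw [expand]
  have bra4 : 0 < ‖t₁ z‖ ^ 2 - (‖z‖ ^ (n₄ - n₁) * ‖t₄ z‖) ^ 2 := by
    have h0 : 0 ≤ ‖z‖ ^ (n₄ - n₁) * ‖t₄ z‖ := by positivity
    have h1 := pow_lt_pow_left₀ key4 h0 two_ne_zero
    have h2 := pow_lt_pow_left₀ hb₁ hm₁.le two_ne_zero
    linarith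
  have bra2 : 0 < ‖t₃ z‖ ^ 2 - (‖z‖ ^ (n₂ - n₃) * ‖t₂ z‖) ^ 2 := by
    have h0 : 0 ≤ ‖z‖ ^ (n₂ - n₃) * ‖t₂ z‖ := by positivity
    have h1 := pow_lt_pow_left₀ key2 h0 two_ne_zero
    have h2 := pow_lt_pow_left₀ hb₃ hm₃.le two_ne_zero
    linarith
  have hpq : Ppoly n₁ A z ≠ 0 ∨ Ppoly n₃ B z ≠ 0 := by
    by_contra h
    push_neg at h
    exact hPQ ⟨h.1, h.2⟩
  rcases hpq with hP | hQ
  · have hp : 0 < Complex.normSq (Ppoly n₁ A z) := Complex.normSq_pos.mpr hP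
    have hq : 0 ≤ Complex.normSq (Ppoly n₃ B z) := Complex.normSq_nonneg _
    have h1 := mul_pos hp bra4
    have h2 := mul_nonneg hq bra2.le
    linarith
  · have hq : 0 < Complex.normSq (Ppoly n₃ B z) := Complex.normSq_pos.mpr hQ
    have hp : 0 ≤ Complex.normSq (Ppoly n₁ A z) := Complex.normSq_nonneg _
    have h1 := mul_nonneg hp bra4.le
    have h2 := mul_pos hq bra2
    linarith
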